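/- Let S be a multiset of m i.i.d. uniform samples from a nonempty finite set P ⊆ R^d. Then for any 0 < γ, δ ≤ 1 with m ≥ 1/(γδ), with probability at least 1 - δ, Σ_{p∈P} ||p - Γ(S)||^2 ≤ (1 + γ) · Δ_1(P). (This is the (f, γ, δ)-sampling property of squared Euclidean distance with f(γ,δ) = 1/(γδ).) -/

import Mathlib

open scoped Classical

section Aux
variable {E : Type*} [NormedAddCommGroup E] [InnerProductSpace ℝ E]
variable {α : Type*} [Fintype α]

lemma sum_pi_succ (m : ℕ) (F : (Fin (m+1) → α) → E) :
    ∑ s : Fin (m+1) → α, F s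
      = ∑ a : α, ∑ t : Fin m → α, F (Fin.cons a t : Fin (m+1) → α) := by
  have h := Fintype.sum_equiv (Fin.consEquiv (fun _ : Fin (m+1) => α)).symm F
    (fun p => F (Fin.cons p.1 p.2 : Fin (m+1) → α)) (fun s => by
      simp [Fin.consEquiv])
  rw [h, Fintype.sum_prod_type]

lemma sum_T_eq_zero (v : α → E) (hv : ∑ a, v a = 0) :
    ∀ m : ℕ, ∑ s : Fin m → α, ∑ i, v (s i) = 0 := by
  intro m
  induction m with
  | zero => simp
  | succ m ih =>
    rw [sum_pi_succ]
    have h : ∀ a : α, ∀ t : Fin m → α,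
        ∑ i : Fin (m+1), v ((Fin.cons a t : Fin (m+1) → α) i)
          = v a + ∑ i : Fin m, v (t i) := by
      intro a t; rw [Fin.sum_univ_succ]; simp
    simp only [h]
    rw [Finset.sum_congr rfl (fun a _ => by
      rw [Finset.sum_add_distrib, Finset.sum_const, ih, add_zero])]
    rw [← Finset.smul_sum, hv, smul_zero]


lemma sum_normsq_T (v : α → E) (hv : ∑ a, v a = 0) (m : ℕ) :
    (Fintype.card α : ℝ) * ∑ s : Fin m → α, ‖∑ i, v (s i)‖ ^ 2
      = m * (Fintype.card α : ℝ) ^ m * ∑ a, ‖v a‖ ^ 2 := by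
  induction m with
  | zero => simp
  | succ m ih =>
    rw [sum_pi_succ]
    have h1 : ∀ a : α, ∀ t : Fin m → α,
        ‖∑ i : Fin (m+1), v ((Fin.cons a t : Fin (m+1) → α) i)‖ ^ 2
          = ‖v a‖ ^ 2 + 2 * (inner ℝ (v a) (∑ i : Fin m, v (t i)) : ℝ)
            + ‖∑ i : Fin m, v (t i)‖ ^ 2 := by
      intro a t
      rw [Fin.sum_univ_succ]
      simp only [Fin.cons_zero, Fin.cons_succ]
      exact norm_add_sq_real _ _
    simp only [h1]
    have h2 : ∀ a : α, ∑ t : Fin m → α,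
        (‖v a‖ ^ 2 + 2 * (inner ℝ (v a) (∑ i : Fin m, v (t i)) : ℝ)
          + ‖∑ i : Fin m, v (t i)‖ ^ 2)
        = (Fintype.card α : ℝ) ^ m * ‖v a‖ ^ 2
          + ∑ t : Fin m → α, ‖∑ i : Fin m, v (t i)‖ ^ 2 := by
      intro a
      rw [Finset.sum_add_distrib, Finset.sum_add_distrib]
      have hz : ∑ t : Fin m → α, 2 * (inner ℝ (v a) (∑ i : Fin m, v (t i)) : ℝ) = 0 := by
        rw [← Finset.mul_sum, ← inner_sum, sum_T_eq_zero v hv m, inner_zero_right, mul_zero]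
      rw [hz, add_zero, Finset.sum_const, Finset.card_univ, nsmul_eq_mul]
      simp [Fintype.card_fun, mul_comm]
    simp only [h2]
    rw [Finset.sum_add_distrib, ← Finset.mul_sum, Finset.sum_const, Finset.card_univ,
      nsmul_eq_mul]
    push_cast
    linear_combination (Fintype.card α : ℝ) * ih


lemma cost_identity (P : Finset E) (μ : E) (hμ : ∑ p ∈ P, (p - μ) = 0) (c : E) :
    ∑ p ∈ P, ‖p - c‖ ^ 2 = ∑ p ∈ P, ‖p - μ‖ ^ 2 + (P.card : ℝ) * ‖μ - c‖ ^ 2 := by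
  have h : ∀ p : E, ‖p - c‖ ^ 2
      = ‖p - μ‖ ^ 2 + 2 * (inner ℝ (p - μ) (μ - c) : ℝ) + ‖μ - c‖ ^ 2 := by
    intro p
    have hp : p - c = (p - μ) + (μ - c) := by abel
    rw [hp, norm_add_sq_real]
  rw [Finset.sum_congr rfl fun p _ => h p]
  rw [Finset.sum_add_distrib, Finset.sum_add_distrib, ← Finset.mul_sum, ← sum_inner, hμ]
  simp [mul_comm]


end Aux

set_option maxHeartbeats 1000000 in

/-- The `(f, γ, δ)`-sampling property of squared Euclidean distance with `f(γ,δ) = 1/(γδ)`: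
for `m ≥ 1/(γδ)` i.i.d. uniform samples from `P`, with probability at least `1 - δ`
(i.e. for at least a `(1-δ)` fraction of all `m`-tuples from `P`), the 1-means cost of the
sample mean is at most `(1 + γ) · Δ₁(P)`, where `Δ₁(P) = min_c ∑_{p∈P} ‖p - c‖²`. -/
theorem sampling_property {d : ℕ} (P : Finset (EuclideanSpace ℝ (Fin d)))
    (hP : P.Nonempty) (γ δ : ℝ) (hγ0 : 0 < γ) (hγ1 : γ ≤ 1) (hδ0 : 0 < δ) (hδ1 : δ ≤ 1)
    (m : ℕ) (hm : 1 / (γ * δ) ≤ (m : ℝ)) :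
    (1 - δ) * (P.card : ℝ) ^ m ≤
      ((Finset.univ.filter fun s : Fin m → {x // x ∈ P} =>
        ∑ p ∈ P, ‖p - ((m : ℝ)⁻¹ • ∑ i, ((s i : EuclideanSpace ℝ (Fin d))))‖ ^ 2 ≤
          (1 + γ) * ⨅ c : EuclideanSpace ℝ (Fin d), ∑ p ∈ P, ‖p - c‖ ^ 2).card : ℝ) := by
  classical
  have hγδ : 0 < γ * δ := mul_pos hγ0 hδ0
  have hm1 : 1 ≤ (m : ℝ) := le_trans (by rw [le_div_iff₀ hγδ]; nlinarith) hm
  have hm0 : (0 : ℝ) < m := lt_of_lt_of_le one_pos hm1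
  have hmne : (m : ℝ) ≠ 0 := ne_of_gt hm0
  have hn0 : 0 < P.card := Finset.card_pos.mpr hP
  have hnR : (0 : ℝ) < (P.card : ℝ) := by exact_mod_cast hn0
  set μ : EuclideanSpace ℝ (Fin d) := (P.card : ℝ)⁻¹ • ∑ p ∈ P, p with hμdef
  have hμ : ∑ p ∈ P, (p - μ) = 0 := by
    rw [Finset.sum_sub_distrib, Finset.sum_const, hμdef, ← Nat.cast_smul_eq_nsmul ℝ,
      smul_smul, mul_inv_cancel₀ (ne_of_gt hnR), one_smul, sub_self]
  set Δ : ℝ := ∑ p ∈ P, ‖p - μ‖ ^ 2 with hΔdef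
  have hΔ0 : 0 ≤ Δ := Finset.sum_nonneg fun p _ => by positivity
  have hid : ∀ c : EuclideanSpace ℝ (Fin d), ∑ p ∈ P, ‖p - c‖ ^ 2 = Δ + (P.card : ℝ) * ‖μ - c‖ ^ 2 :=
    cost_identity P μ hμ
  have hinf : (⨅ c : EuclideanSpace ℝ (Fin d), ∑ p ∈ P, ‖p - c‖ ^ 2) = Δ := by
    refine le_antisymm ?_ (le_ciInf fun c => ?_)
    · have h : (⨅ c : EuclideanSpace ℝ (Fin d), ∑ p ∈ P, ‖p - c‖ ^ 2) ≤ ∑ p ∈ P, ‖p - μ‖ ^ 2 := by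
        apply ciInf_le ⟨Δ, ?_⟩ μ
        rintro x ⟨c, rfl⟩
        show Δ ≤ ∑ p ∈ P, ‖p - c‖ ^ 2
        rw [hid c]; nlinarith [sq_nonneg ‖μ - c‖]
      rw [hΔdef]; exact h
    · show Δ ≤ ∑ p ∈ P, ‖p - c‖ ^ 2
      rw [hid c]; nlinarith [sq_nonneg ‖μ - c‖]
  simp only [hinf]
  -- the sample space
  set α := {x // x ∈ P}
  have hcard : (Fintype.card α : ℝ) = (P.card : ℝ) := by
    simp [α, Fintype.card_coe]
  set v : α → EuclideanSpace ℝ (Fin d) := fun a => (a : EuclideanSpace ℝ (Fin d)) - μ with hvdef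
  have hv : ∑ a : α, v a = 0 := by
    rw [hvdef]
    rw [← Finset.sum_attach P (fun p => p - μ)] at hμ
    exact hμ
  have hvΔ : ∑ a : α, ‖v a‖ ^ 2 = Δ := by
    rw [hΔdef, ← Finset.sum_attach P (fun p => ‖p - μ‖ ^ 2)]
    rfl
  set g : (Fin m → α) → ℝ := fun s => ‖∑ i, v (s i)‖ ^ 2 with hg
  have hg0 : ∀ s, 0 ≤ g s := fun s => by rw [hg]; positivity
  have hmean : ∀ s : Fin m → α, μ - (m : ℝ)⁻¹ • ∑ i, ((s i : EuclideanSpace ℝ (Fin d)))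
      = -((m : ℝ)⁻¹ • ∑ i, v (s i)) := by
    intro s
    have : ∑ i : Fin m, v (s i) = (∑ i, ((s i : EuclideanSpace ℝ (Fin d)))) - m • μ := by
      simp [hvdef, Finset.sum_sub_distrib]
    rw [this, smul_sub, neg_sub]
    congr 1
    rw [← Nat.cast_smul_eq_nsmul ℝ, smul_smul, inv_mul_cancel₀ hmne, one_smul]
  have hcost : ∀ s : Fin m → α,
      ∑ p ∈ P, ‖p - ((m : ℝ)⁻¹ • ∑ i, ((s i : EuclideanSpace ℝ (Fin d))))‖ ^ 2
        = Δ + (P.card : ℝ) * ((m : ℝ)⁻¹ ^ 2 * g s) := by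
    intro s
    rw [hid, hmean s, norm_neg, norm_smul, hg]
    rw [Real.norm_eq_abs, abs_of_nonneg (by positivity), mul_pow]
  have hsum := sum_normsq_T v hv m
  rw [hvΔ, hcard] at hsum
  have hsum' : (P.card : ℝ) * ∑ s : Fin m → α, g s = m * (P.card : ℝ) ^ m * Δ := hsum
  -- total deviation
  have htot : ∑ s : Fin m → α, ((P.card : ℝ) * ((m : ℝ)⁻¹ ^ 2 * g s))
      = (P.card : ℝ) ^ m * Δ / m := by
    rw [← Finset.mul_sum, ← Finset.mul_sum, eq_div_iff hmne]
    field_simp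
    linear_combination hsum'
  set pred : (Fin m → α) → Prop := fun s =>
    ∑ p ∈ P, ‖p - ((m : ℝ)⁻¹ • ∑ i, ((s i : EuclideanSpace ℝ (Fin d))))‖ ^ 2 ≤ (1 + γ) * Δ with hpred
  have hcardU : ((Finset.univ : Finset (Fin m → α)).card : ℝ) = (P.card : ℝ) ^ m := by
    rw [Finset.card_univ, Fintype.card_fun, Fintype.card_fin]
    push_cast [hcard]
    rfl
  by_cases hΔz : Δ = 0
  · have hall : ∀ s : Fin m → α, pred s := by
      intro s
      have hpts : ∀ a : α, v a = 0 := by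
        intro a
        have h1 : ∑ a : α, ‖v a‖ ^ 2 = 0 := by rw [hvΔ, hΔz]
        have h2 : ‖v a‖ ^ 2 = 0 :=
          (Finset.sum_eq_zero_iff_of_nonneg (fun a _ => by positivity)).mp h1 a (Finset.mem_univ a)
        simpa using h2
      rw [hpred]
      dsimp only
      rw [hcost s, hΔz]
      have hgz : g s = 0 := by rw [hg]; simp [hpts]
      simp [hgz]
    rw [Finset.filter_true_of_mem (fun s _ => hall s), hcardU]
    nlinarith [pow_pos hnR m]
  · have hΔpos : 0 < Δ := lt_of_le_of_ne hΔ0 (Ne.symm hΔz)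
    set B := Finset.univ.filter (fun s : Fin m → α => ¬ pred s) with hB
    have hBbound : (B.card : ℝ) * (γ * Δ) ≤ (P.card : ℝ) ^ m * Δ / m := by
      have h1 : (B.card : ℝ) * (γ * Δ) ≤ ∑ s ∈ B,
          ((P.card : ℝ) * ((m : ℝ)⁻¹ ^ 2 * g s)) := by
        rw [← nsmul_eq_mul]
        apply Finset.card_nsmul_le_sum
        intro s hs
        rw [hB, Finset.mem_filter] at hs
        have hns := hs.2
        rw [hpred] at hns
        dsimp only at hns
        rw [hcost s] at hns
        push_neg at hns
        nlinarith [hns]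
      have h2 : ∑ s ∈ B, ((P.card : ℝ) * ((m : ℝ)⁻¹ ^ 2 * g s))
          ≤ ∑ s ∈ Finset.univ, ((P.card : ℝ) * ((m : ℝ)⁻¹ ^ 2 * g s)) := by
        apply Finset.sum_le_sum_of_subset_of_nonneg (Finset.subset_univ B)
        intro s _ _
        exact mul_nonneg hnR.le (mul_nonneg (by positivity) (hg0 s))
      calc (B.card : ℝ) * (γ * Δ) ≤ _ := h1
        _ ≤ _ := h2
        _ = (P.card : ℝ) ^ m * Δ / m := htot
    have hBcard : (B.card : ℝ) ≤ δ * (P.card : ℝ) ^ m := by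
      have hδγm : 1 ≤ γ * δ * m := by
        rw [div_le_iff₀ hγδ] at hm
        nlinarith
      have h3 : (B.card : ℝ) * (γ * Δ * m) ≤ (P.card : ℝ) ^ m * Δ := by
        have h := mul_le_mul_of_nonneg_right hBbound (le_of_lt hm0)
        rw [div_mul_cancel₀ _ hmne] at h
        nlinarith [h]
      have h3' : ((B.card : ℝ) * (γ * m)) * Δ ≤ ((P.card : ℝ) ^ m) * Δ := by
        linear_combination h3
      have h4 : (B.card : ℝ) * (γ * m) ≤ (P.card : ℝ) ^ m :=
        le_of_mul_le_mul_right h3' hΔpos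
      nlinarith [h4, mul_le_mul_of_nonneg_left hδγm (Nat.cast_nonneg B.card : (0:ℝ) ≤ (B.card : ℝ)),
        mul_le_mul_of_nonneg_right h4 hδ0.le]
    have hsplit : ((Finset.univ.filter pred).card : ℝ) + (B.card : ℝ)
        = (P.card : ℝ) ^ m := by
      rw [← hcardU, hB]
      have h := Finset.card_filter_add_card_filter_not
        (s := (Finset.univ : Finset (Fin m → α))) (p := pred)
      exact_mod_cast h
    have : (1 - δ) * (P.card : ℝ) ^ m ≤ ((Finset.univ.filter pred).card : ℝ) := by
      nlinarith [hBcard, hsplit]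
    exact this
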